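/- arXiv:2012.08324 — 2 statements merged into one kernel-verified Lean document; each statement's English description precedes it below -/
import Mathlib

section
/- Let C be a 2-copula that is stochastically decreasing in the first component (u ↦ C(u,v) convex for each v). Then for every 2-copula D and all u,v ∈ [0,1], C(u,v) ≤ (D * C)(u,v), where * denotes the Markov product. -/
open MeasureTheory Set Filter
open scoped Topology

lemma aux_deriv_nonneg {f : ℝ → ℝ} (hf : Monotone f) (x : ℝ) : 0 ≤ deriv f x := by
  by_cases h : DifferentiableAt ℝ f x
  · have h' := h.hasDerivAt
    rw [hasDerivAt_iff_tendsto_slope] at h'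
    refine ge_of_tendsto h' ?_
    filter_upwards [self_mem_nhdsWithin] with y (hy : y ≠ x)
    rcases lt_or_gt_of_ne hy with h1 | h1
    · rw [slope_def_field]
      rw [div_nonneg_iff]
      right
      exact ⟨by have := hf h1.le; linarith, by linarith⟩
    · rw [slope_def_field]
      apply div_nonneg
      · have := hf h1.le; linarith
      · linarith
  · simp [deriv_zero_of_not_differentiableAt h]

lemma aux_deriv_le_one {f : ℝ → ℝ} (hf2 : Monotone fun t => t - f t) (x : ℝ) :
    deriv f x ≤ 1 := by
  by_cases h : DifferentiableAt ℝ f x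
  · have h3 := aux_deriv_nonneg hf2 x
    rw [deriv_fun_sub (f := fun t => t) differentiableAt_id h] at h3
    simp at h3
    linarith
  · simp [deriv_zero_of_not_differentiableAt h]

lemma aux_integral_deriv_le {f : ℝ → ℝ} (hf : Monotone f) (hc : Continuous f)
    {a b : ℝ} (hab : a ≤ b) : ∫ t in a..b, deriv f t ≤ f b - f a := by
  set μ := hf.stieltjesFunction.measure with hμ
  have heq : ∀ᵐ t : ℝ, deriv f t = (μ.rnDeriv volume t).toReal := by
    filter_upwards [hf.ae_hasDerivAt] with t ht using ht.deriv
  have hsf : ∀ x, hf.stieltjesFunction x = f x := by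
    intro x
    rw [hf.stieltjesFunction_eq]
    exact rightLim_eq_of_tendsto
      (hc.continuousAt.continuousWithinAt.tendsto)
  have hfin : μ (Ioc a b) ≠ ⊤ := by
    rw [hμ, StieltjesFunction.measure_Ioc]; exact ENNReal.ofReal_ne_top
  rw [intervalIntegral.integral_of_le hab]
  calc ∫ t in Ioc a b, deriv f t
      = ∫ t in Ioc a b, (μ.rnDeriv volume t).toReal :=
        integral_congr_ae (ae_restrict_of_ae heq)
    _ = (∫⁻ t in Ioc a b, μ.rnDeriv volume t).toReal := by
        apply integral_toReal (μ.measurable_rnDeriv volume).aemeasurable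
        exact ae_restrict_of_ae (μ.rnDeriv_lt_top volume)
    _ ≤ (μ (Ioc a b)).toReal :=
        ENNReal.toReal_mono hfin (μ.setLIntegral_rnDeriv_le _)
    _ = f b - f a := by
        rw [hμ, StieltjesFunction.measure_Ioc, hsf, hsf,
          ENNReal.toReal_ofReal (by have := hf hab; linarith)]

lemma aux_intervalIntegrable {h : ℝ → ℝ} (hm : Measurable h) (hb : ∀ t, |h t| ≤ 1)
    (a b : ℝ) : IntervalIntegrable h volume a b := by
  rw [intervalIntegrable_iff]
  have : IsFiniteMeasure (volume.restrict (Set.uIoc a b)) :=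
    ⟨by rw [Measure.restrict_apply_univ]; exact measure_Ioc_lt_top⟩
  exact Integrable.mono' (integrable_const 1) hm.aestronglyMeasurable
    (ae_of_all _ (by simpa [Real.norm_eq_abs] using hb))

lemma aux_integral_deriv_eq {f : ℝ → ℝ} (hf : Monotone f)
    (hf2 : Monotone fun t => t - f t) {a b : ℝ} (hab : a ≤ b) :
    ∫ t in a..b, deriv f t = f b - f a := by
  have hlip : Continuous f := by
    have : LipschitzWith 1 f := by
      apply LipschitzWith.of_dist_le_mul
      intro x y
      rw [Real.dist_eq, Real.dist_eq, NNReal.coe_one, one_mul]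
      rcases le_total x y with hxy | hxy
      · have h1 := hf hxy; have h2 := hf2 hxy; simp only at h2
        rw [abs_sub_comm (f x), abs_of_nonneg (by linarith : (0:ℝ) ≤ f y - f x),
          abs_sub_comm x, abs_of_nonneg (by linarith : (0:ℝ) ≤ y - x)]
        linarith
      · have h1 := hf hxy; have h2 := hf2 hxy; simp only at h2
        rw [abs_of_nonneg (by linarith : (0:ℝ) ≤ f x - f y),
          abs_of_nonneg (by linarith : (0:ℝ) ≤ x - y)]
        linarith
    exact this.continuous
  have h2c : Continuous fun t => t - f t := continuous_id.sub hlip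
  have h1 := aux_integral_deriv_le hf hlip hab
  have h2 := aux_integral_deriv_le hf2 h2c hab
  have hb1 : ∀ t, |deriv f t| ≤ 1 := fun t =>
    abs_le.2 ⟨by linarith [aux_deriv_nonneg hf t], aux_deriv_le_one hf2 t⟩
  have hint : IntervalIntegrable (deriv f) volume a b :=
    aux_intervalIntegrable (measurable_deriv f) hb1 a b
  have hae : ∀ᵐ t : ℝ, deriv (fun t => t - f t) t = 1 - deriv f t := by
    filter_upwards [hf.ae_differentiableAt] with t ht
    rw [deriv_fun_sub (f := fun t => t) differentiableAt_id ht, deriv_id'']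
  have h3 : ∫ t in a..b, deriv (fun t => t - f t) t = (b - a) - ∫ t in a..b, deriv f t := by
    rw [intervalIntegral.integral_congr_ae
      (by filter_upwards [hae] with t ht _ using ht),
      intervalIntegral.integral_sub intervalIntegrable_const hint,
      intervalIntegral.integral_const]
    simp
  rw [h3] at h2
  linarith

def IsCopula (C : ℝ → ℝ → ℝ) : Prop :=
  (∀ u ∈ Icc (0:ℝ) 1, C u 0 = 0 ∧ C u 1 = u) ∧
  (∀ v ∈ Icc (0:ℝ) 1, C 0 v = 0 ∧ C 1 v = v) ∧
  (∀ u₁ u₂ v₁ v₂ : ℝ, u₁ ∈ Icc (0:ℝ) 1 → u₂ ∈ Icc (0:ℝ) 1 →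
    v₁ ∈ Icc (0:ℝ) 1 → v₂ ∈ Icc (0:ℝ) 1 → u₁ ≤ u₂ → v₁ ≤ v₂ →
    0 ≤ C u₂ v₂ - C u₂ v₁ - C u₁ v₂ + C u₁ v₁)

/-- Markov product of two copulas: (C₁ * C₂)(u,v) = ∫₀¹ ∂₂C₁(u,t) ∂₁C₂(t,v) dt. -/
noncomputable def MarkovProduct (C₁ C₂ : ℝ → ℝ → ℝ) (u v : ℝ) : ℝ :=
  ∫ t in (0:ℝ)..1, deriv (fun s => C₁ u s) t * deriv (fun s => C₂ s v) t

/-- Stochastically increasing in the first component: u ↦ C(u,v) is concave for each v. -/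
def StochIncr (C : ℝ → ℝ → ℝ) : Prop :=
  ∀ v ∈ Icc (0:ℝ) 1, ConcaveOn ℝ (Icc (0:ℝ) 1) (fun u => C u v)

/-- Stochastically decreasing in the first component: u ↦ C(u,v) is convex for each v. -/
def StochDecr (C : ℝ → ℝ → ℝ) : Prop :=
  ∀ v ∈ Icc (0:ℝ) 1, ConvexOn ℝ (Icc (0:ℝ) 1) (fun u => C u v)

theorem le_markovProduct_of_stochDecr (C : ℝ → ℝ → ℝ) (hC : IsCopula C) (hSD : StochDecr C) :
    ∀ D : ℝ → ℝ → ℝ, IsCopula D →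
      ∀ u ∈ Icc (0:ℝ) 1, ∀ v ∈ Icc (0:ℝ) 1, C u v ≤ MarkovProduct D C u v := by
  obtain ⟨hCu, hCv, hC2⟩ := hC
  intro D hD u hu v hv
  obtain ⟨hDu, hDv, hD2⟩ := hD
  have hu0 : (0:ℝ) ≤ u := hu.1
  have hu1 : u ≤ 1 := hu.2
  have h01 : (0:ℝ) ∈ Icc (0:ℝ) 1 := by norm_num
  have h11 : (1:ℝ) ∈ Icc (0:ℝ) 1 := by norm_num
  set cl : ℝ → ℝ := fun t => max 0 (min 1 t) with hcl
  have hclmem : ∀ t, cl t ∈ Icc (0:ℝ) 1 := fun t =>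
    ⟨le_max_left _ _, max_le (by norm_num) (min_le_left _ _)⟩
  have hclid : ∀ t ∈ Icc (0:ℝ) 1, cl t = t := fun t ht => by
    simp [hcl, min_eq_right ht.2, max_eq_right ht.1]
  have hclmono : Monotone cl := fun s t hst =>
    max_le_max le_rfl (min_le_min le_rfl hst)
  have hcllip : ∀ s t : ℝ, s ≤ t → cl t - cl s ≤ t - s := by
    intro s t hst
    simp only [hcl, min_def, max_def]
    split_ifs <;> linarith
  have hDmono : ∀ s t, s ∈ Icc (0:ℝ) 1 → t ∈ Icc (0:ℝ) 1 → s ≤ t → D u s ≤ D u t := by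
    intro s t hs ht hst
    have h := hD2 0 u s t h01 hu hs ht hu0 hst
    have e1 := (hDv s hs).1; have e2 := (hDv t ht).1
    linarith
  have hDlip : ∀ s t, s ∈ Icc (0:ℝ) 1 → t ∈ Icc (0:ℝ) 1 → s ≤ t → D u t - D u s ≤ t - s := by
    intro s t hs ht hst
    have h := hD2 u 1 s t hu h11 hs ht hu1 hst
    have e1 := (hDv s hs).2; have e2 := (hDv t ht).2
    linarith
  have hCmono : ∀ s t, s ∈ Icc (0:ℝ) 1 → t ∈ Icc (0:ℝ) 1 → s ≤ t → C s v ≤ C t v := by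
    intro s t hs ht hst
    have h := hC2 s t 0 v hs ht h01 hv hst hv.1
    have e1 := (hCu s hs).1; have e2 := (hCu t ht).1
    linarith
  have hClip : ∀ s t, s ∈ Icc (0:ℝ) 1 → t ∈ Icc (0:ℝ) 1 → s ≤ t → C t v - C s v ≤ t - s := by
    intro s t hs ht hst
    have h := hC2 s t v 1 hs ht hv h11 hst hv.2
    have e1 := (hCu s hs).2; have e2 := (hCu t ht).2
    linarith
  set φ : ℝ → ℝ := fun t => D u (cl t) with hφ
  set g : ℝ → ℝ := fun t => C (cl t) v with hg
  have hφmono : Monotone φ := fun s t hst => hDmono _ _ (hclmem s) (hclmem t) (hclmono hst)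
  have hφ2 : Monotone fun t => t - φ t := by
    intro s t hst
    simp only [hφ]
    have h1 := hDlip _ _ (hclmem s) (hclmem t) (hclmono hst)
    have h2 := hcllip s t hst
    linarith
  have hgmono : Monotone g := fun s t hst => hCmono _ _ (hclmem s) (hclmem t) (hclmono hst)
  have hg2 : Monotone fun t => t - g t := by
    intro s t hst
    simp only [hg]
    have h1 := hClip _ _ (hclmem s) (hclmem t) (hclmono hst)
    have h2 := hcllip s t hst
    linarith
  have hφ'mem : ∀ t, deriv φ t ∈ Icc (0:ℝ) 1 := fun t =>
    ⟨aux_deriv_nonneg hφmono t, aux_deriv_le_one hφ2 t⟩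
  have hg'mem : ∀ t, deriv g t ∈ Icc (0:ℝ) 1 := fun t =>
    ⟨aux_deriv_nonneg hgmono t, aux_deriv_le_one hg2 t⟩
  have hφ'abs : ∀ t, |deriv φ t| ≤ 1 := fun t =>
    abs_le.2 ⟨by linarith [(hφ'mem t).1], (hφ'mem t).2⟩
  have hg'abs : ∀ t, |deriv g t| ≤ 1 := fun t =>
    abs_le.2 ⟨by linarith [(hg'mem t).1], (hg'mem t).2⟩
  have hcl0 : cl 0 = 0 := hclid 0 h01
  have hcl1 : cl 1 = 1 := hclid 1 h11
  have hclu : cl u = u := hclid u hu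
  have hA : ∫ t in (0:ℝ)..1, deriv φ t = u := by
    rw [aux_integral_deriv_eq hφmono hφ2 zero_le_one]
    simp only [hφ, hcl0, hcl1]
    rw [(hDu u hu).2, (hDu u hu).1, sub_zero]
  have hB : ∫ t in (0:ℝ)..u, deriv g t = C u v := by
    rw [aux_integral_deriv_eq hgmono hg2 hu0]
    simp only [hg, hcl0, hclu]
    rw [(hCv v hv).1, sub_zero]
  have hae_ne : ∀ a : ℝ, ∀ᵐ t : ℝ, t ≠ a := by
    intro a
    rw [ae_iff]
    have h : {t : ℝ | ¬ t ≠ a} = {a} := by ext t; simp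
    rw [h]
    exact measure_singleton a
  have hφcong : ∀ t ∈ Ioo (0:ℝ) 1, deriv (fun s => D u s) t = deriv φ t := by
    intro t ht
    apply Filter.EventuallyEq.deriv_eq
    filter_upwards [Ioo_mem_nhds ht.1 ht.2] with s hs
    simp only [hφ]
    rw [hclid s ⟨hs.1.le, hs.2.le⟩]
  have hgeq : ∀ t ∈ Ioo (0:ℝ) 1, (fun s => C s v) =ᶠ[nhds t] g := by
    intro t ht
    filter_upwards [Ioo_mem_nhds ht.1 ht.2] with s hs
    simp only [hg]
    rw [hclid s ⟨hs.1.le, hs.2.le⟩]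
  have hMP : MarkovProduct D C u v = ∫ t in (0:ℝ)..1, deriv φ t * deriv g t := by
    rw [MarkovProduct]
    apply intervalIntegral.integral_congr_ae
    filter_upwards [hae_ne 1] with t ht htmem
    rw [uIoc_of_le zero_le_one] at htmem
    have htI : t ∈ Ioo (0:ℝ) 1 := ⟨htmem.1, lt_of_le_of_ne htmem.2 ht⟩
    rw [hφcong t htI, (hgeq t htI).deriv_eq]
  have hconv := hSD v hv
  obtain ⟨c, hc0, hc1, hcP1, hcP2⟩ :
      ∃ c : ℝ, 0 ≤ c ∧ c ≤ 1 ∧ (∀ t ∈ Ioo (0:ℝ) u, deriv g t ≤ c) ∧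
        (∀ t ∈ Ioo u (1:ℝ), DifferentiableAt ℝ g t → c ≤ deriv g t) := by
    by_cases hu1' : u < 1
    · set S : Set ℝ := (fun s => (C s v - C u v) / (s - u)) '' Ioc u 1 with hS
      have hne : S.Nonempty := ⟨_, 1, ⟨hu1', le_refl 1⟩, rfl⟩
      have hlb0 : ∀ x ∈ S, 0 ≤ x := by
        rintro x ⟨s, hs, rfl⟩
        simp only
        apply div_nonneg
        · have := hCmono u s hu ⟨hu0.trans hs.1.le, hs.2⟩ hs.1.le; linarith
        · linarith [hs.1]
      have hbdd : BddBelow S := ⟨0, hlb0⟩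
      refine ⟨sInf S, le_csInf hne hlb0, ?_, ?_, ?_⟩
      · refine (csInf_le hbdd ⟨1, ⟨hu1', le_refl 1⟩, rfl⟩).trans ?_
        simp only
        rw [div_le_one (by linarith)]
        have := hClip u 1 hu h11 hu1
        linarith
      · intro t ht
        by_cases hd : DifferentiableAt ℝ g t
        · have htI : t ∈ Ioo (0:ℝ) 1 := ⟨ht.1, ht.2.trans_le hu1⟩
          have heq := hgeq t htI
          have hd' : DifferentiableAt ℝ (fun s => C s v) t := hd.congr_of_eventuallyEq heq
          rw [← heq.deriv_eq]
          have h1 : deriv (fun s => C s v) t ≤ slope (fun w => C w v) t u :=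
            hconv.deriv_le_slope ⟨ht.1.le, htI.2.le⟩ hu ht.2 hd'
          rw [slope_def_field] at h1
          refine h1.trans (le_csInf hne ?_)
          rintro x ⟨s, hs, rfl⟩
          simp only
          exact hconv.slope_mono_adjacent ⟨ht.1.le, htI.2.le⟩
            ⟨hu0.trans hs.1.le, hs.2⟩ ht.2 hs.1
        · rw [deriv_zero_of_not_differentiableAt hd]
          exact le_csInf hne hlb0
      · intro t ht hd
        have htI : t ∈ Ioo (0:ℝ) 1 := ⟨hu0.trans_lt ht.1, ht.2⟩
        have heq := hgeq t htI
        have hd' : DifferentiableAt ℝ (fun s => C s v) t := hd.congr_of_eventuallyEq heq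
        rw [← heq.deriv_eq]
        refine (csInf_le hbdd ⟨t, ⟨ht.1, ht.2.le⟩, rfl⟩).trans ?_
        have h1 : slope (fun w => C w v) u t ≤ deriv (fun s => C s v) t :=
          hconv.slope_le_deriv hu ⟨hu0.trans ht.1.le, ht.2.le⟩ ht.1 hd'
        rw [slope_def_field] at h1
        exact h1
    · have hu1'' : u = 1 := le_antisymm hu1 (not_lt.1 hu1')
      exact ⟨1, zero_le_one, le_refl 1, fun t ht => (hg'mem t).2,
        fun t ht _ => absurd ht.2 (by rw [hu1''] at ht; linarith [ht.1])⟩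
  have hφ'meas := measurable_deriv φ
  have hg'meas := measurable_deriv g
  have hprodabs : ∀ t, |deriv φ t * deriv g t| ≤ 1 := by
    intro t
    rw [abs_mul]
    exact mul_le_one₀ (hφ'abs t) (abs_nonneg _) (hg'abs t)
  have iφ : ∀ a b : ℝ, IntervalIntegrable (deriv φ) volume a b :=
    aux_intervalIntegrable hφ'meas hφ'abs
  have ig : ∀ a b : ℝ, IntervalIntegrable (deriv g) volume a b :=
    aux_intervalIntegrable hg'meas hg'abs
  have ipr : ∀ a b : ℝ, IntervalIntegrable (fun t => deriv φ t * deriv g t) volume a b :=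
    aux_intervalIntegrable (hφ'meas.mul hg'meas) hprodabs
  have hsplitφ : (∫ t in (0:ℝ)..u, deriv φ t) + ∫ t in u..(1:ℝ), deriv φ t = u := by
    rw [intervalIntegral.integral_add_adjacent_intervals (iφ 0 u) (iφ u 1), hA]
  have hsplitpr : (∫ t in (0:ℝ)..u, deriv φ t * deriv g t)
      + ∫ t in u..(1:ℝ), deriv φ t * deriv g t = MarkovProduct D C u v := by
    rw [intervalIntegral.integral_add_adjacent_intervals (ipr 0 u) (ipr u 1), hMP]
  have ineq1 : (∫ t in (0:ℝ)..u, (deriv g t - deriv φ t * deriv g t))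
      ≤ ∫ t in (0:ℝ)..u, (c - c * deriv φ t) := by
    apply intervalIntegral.integral_mono_ae_restrict hu0 ((ig 0 u).sub (ipr 0 u))
      (intervalIntegrable_const.sub ((iφ 0 u).const_mul c))
    filter_upwards [ae_restrict_mem measurableSet_Icc, ae_restrict_of_ae (hae_ne 0),
      ae_restrict_of_ae (hae_ne u)] with t ht h0 hun
    have htI : t ∈ Ioo (0:ℝ) u := ⟨lt_of_le_of_ne ht.1 (Ne.symm h0), lt_of_le_of_ne ht.2 hun⟩
    have h1 := hcP1 t htI
    nlinarith [mul_nonneg (sub_nonneg.2 h1) (sub_nonneg.2 (hφ'mem t).2)]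
  have ineq2 : (∫ t in u..(1:ℝ), c * deriv φ t)
      ≤ ∫ t in u..(1:ℝ), deriv φ t * deriv g t := by
    apply intervalIntegral.integral_mono_ae_restrict hu1 ((iφ u 1).const_mul c) (ipr u 1)
    filter_upwards [ae_restrict_mem measurableSet_Icc, ae_restrict_of_ae (hae_ne u),
      ae_restrict_of_ae (hae_ne 1), ae_restrict_of_ae hgmono.ae_differentiableAt]
      with t ht hun h1n hdiff
    have htI : t ∈ Ioo u (1:ℝ) := ⟨lt_of_le_of_ne ht.1 (Ne.symm hun), lt_of_le_of_ne ht.2 h1n⟩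
    have h2 := hcP2 t htI hdiff
    nlinarith [mul_nonneg (sub_nonneg.2 h2) (hφ'mem t).1]
  rw [intervalIntegral.integral_sub (ig 0 u) (ipr 0 u), hB] at ineq1
  rw [intervalIntegral.integral_sub intervalIntegrable_const ((iφ 0 u).const_mul c),
    intervalIntegral.integral_const, intervalIntegral.integral_const_mul] at ineq1
  rw [intervalIntegral.integral_const_mul] at ineq2
  have hcsum : c * (∫ t in (0:ℝ)..u, deriv φ t) + c * ∫ t in u..(1:ℝ), deriv φ t = c * u := by
    rw [← mul_add, hsplitφ]
  simp only [smul_eq_mul, sub_zero] at ineq1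
  linarith
end

section
/- If C₁ is stochastically increasing in the first component and C₂ is stochastically decreasing in the first component (or vice versa), then the Markov product C₁ * C₂ is stochastically decreasing in the first component; if both are stochastically decreasing, C₁ * C₂ is stochastically increasing. -/
open MeasureTheory Set Filter

open Topology

lemma deriv_mem_Icc {f : ℝ → ℝ} {t : ℝ} (ht : t ∈ Ioo (0:ℝ) 1)
    (hmono : ∀ s ∈ Icc (0:ℝ) 1, ∀ r ∈ Icc (0:ℝ) 1, s ≤ r → f s ≤ f r)
    (hlip : ∀ s ∈ Icc (0:ℝ) 1, ∀ r ∈ Icc (0:ℝ) 1, s ≤ r → f r - f s ≤ r - s) :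
    deriv f t ∈ Icc (0:ℝ) 1 := by
  by_cases hd : DifferentiableAt ℝ f t
  · have h1 : Tendsto (slope f t) (𝓝[≠] t) (𝓝 (deriv f t)) :=
      hasDerivAt_iff_tendsto_slope.1 hd.hasDerivAt
    have h2 : Tendsto (slope f t) (𝓝[>] t) (𝓝 (deriv f t)) :=
      h1.mono_left (nhdsWithin_mono t (fun x hx => ne_of_gt hx))
    have hmem : Ioo t 1 ∈ 𝓝[>] t := Ioo_mem_nhdsGT_of_mem ⟨le_refl t, ht.2⟩
    have htI : t ∈ Icc (0:ℝ) 1 := ⟨ht.1.le, ht.2.le⟩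
    constructor
    · refine ge_of_tendsto h2 ?_
      filter_upwards [hmem] with s hs
      have hsI : s ∈ Icc (0:ℝ) 1 := ⟨ht.1.le.trans hs.1.le, hs.2.le⟩
      have h3 := hmono t htI s hsI hs.1.le
      rw [slope_def_field]
      exact div_nonneg (by linarith) (by linarith [hs.1])
    · refine le_of_tendsto h2 ?_
      filter_upwards [hmem] with s hs
      have hsI : s ∈ Icc (0:ℝ) 1 := ⟨ht.1.le.trans hs.1.le, hs.2.le⟩
      have h3 := hlip t htI s hsI hs.1.le
      rw [slope_def_field]
      rw [div_le_one (by linarith [hs.1])]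
      linarith
  · simp [deriv_zero_of_not_differentiableAt hd]

noncomputable def clamp (s : ℝ) : ℝ := max 0 (min 1 s)

lemma clamp_mono : Monotone clamp := fun a b h => by
  unfold clamp; exact max_le_max le_rfl (min_le_min le_rfl h)

lemma clamp_eq {s : ℝ} (h : s ∈ Icc (0:ℝ) 1) : clamp s = s := by
  unfold clamp; rw [min_eq_right h.2, max_eq_right h.1]

lemma clamp_mem (s : ℝ) : clamp s ∈ Icc (0:ℝ) 1 := by
  unfold clamp
  constructor
  · exact le_max_left _ _
  · exact max_le zero_le_one (min_le_left _ _)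

-- a.e. differentiability on Ioo 0 1 for functions monotone on Icc 0 1
lemma ae_diff_Ioo {f : ℝ → ℝ}
    (hmono : ∀ s ∈ Icc (0:ℝ) 1, ∀ r ∈ Icc (0:ℝ) 1, s ≤ r → f s ≤ f r) :
    ∀ᵐ t, t ∈ Ioo (0:ℝ) 1 → DifferentiableAt ℝ f t := by
  have hF : Monotone (f ∘ clamp) := fun a b h =>
    hmono _ (clamp_mem a) _ (clamp_mem b) (clamp_mono h)
  filter_upwards [hF.ae_differentiableAt] with t hdF ht
  have heq : f ∘ clamp =ᶠ[𝓝 t] f := by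
    filter_upwards [isOpen_Ioo.mem_nhds ht] with s hs
    simp [clamp_eq ⟨hs.1.le, hs.2.le⟩]
  exact hdF.congr_of_eventuallyEq heq.symm

-- forward difference quotient tendsto deriv
lemma tendsto_quot {f : ℝ → ℝ} {t : ℝ} (hd : DifferentiableAt ℝ f t) :
    Tendsto (fun n : ℕ => (n:ℝ) * (f (t + 1/n) - f t)) atTop (𝓝 (deriv f t)) := by
  have h1 : Tendsto (slope f t) (𝓝[≠] t) (𝓝 (deriv f t)) :=
    hasDerivAt_iff_tendsto_slope.1 hd.hasDerivAt
  have h2 : Tendsto (fun n : ℕ => t + 1/n) atTop (𝓝[≠] t) := by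
    apply tendsto_nhdsWithin_of_tendsto_nhds_of_eventually_within
    · have := tendsto_one_div_atTop_nhds_zero_nat (𝕜 := ℝ)
      have h3 : Tendsto (fun n : ℕ => t + 1/n) atTop (𝓝 (t + 0)) :=
        tendsto_const_nhds.add this
      simpa using h3
    · filter_upwards [eventually_ge_atTop 1] with n hn
      have : (0:ℝ) < 1/n := by positivity
      simp only [mem_compl_iff, mem_singleton_iff]
      intro h
      nlinarith
  have h3 := h1.comp h2
  refine h3.congr' ?_
  filter_upwards [eventually_ge_atTop 1] with n hn
  have hn0 : (0:ℝ) < (n:ℝ) := by exact_mod_cast hn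
  simp only [Function.comp_apply, slope_def_field]
  field_simp
  ring

-- convex function: deriv monotone at interior differentiability points
lemma conv_deriv_mono {f : ℝ → ℝ} (hf : ConvexOn ℝ (Icc (0:ℝ) 1) f)
    {x y : ℝ} (hx : x ∈ Ioo (0:ℝ) 1) (hy : y ∈ Ioo (0:ℝ) 1) (hxy : x ≤ y)
    (hdx : DifferentiableAt ℝ f x) (hdy : DifferentiableAt ℝ f y) :
    deriv f x ≤ deriv f y := by
  rcases eq_or_lt_of_le hxy with rfl | hlt
  · exact le_rfl
  have hxI : x ∈ Icc (0:ℝ) 1 := ⟨hx.1.le, hx.2.le⟩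
  have hyI : y ∈ Icc (0:ℝ) 1 := ⟨hy.1.le, hy.2.le⟩
  -- deriv f x ≤ slope f x y
  have h1 : deriv f x ≤ slope f x y := by
    have ht : Tendsto (slope f x) (𝓝[>] x) (𝓝 (deriv f x)) :=
      (hasDerivAt_iff_tendsto_slope.1 hdx.hasDerivAt).mono_left
        (nhdsWithin_mono x (fun z hz => ne_of_gt hz))
    refine le_of_tendsto ht ?_
    filter_upwards [Ioo_mem_nhdsGT_of_mem ⟨le_refl x, hlt⟩] with s hs
    have hsI : s ∈ Icc (0:ℝ) 1 := ⟨hx.1.le.trans hs.1.le, hs.2.le.trans hy.2.le⟩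
    -- slope f x s ≤ slope f x y since s < y, via slope_mono_adjacent on x<s<y
    have := hf.slope_mono_adjacent hxI hyI hs.1 hs.2
    have hxs : (0:ℝ) < s - x := by linarith [hs.1]
    have hsy : (0:ℝ) < y - s := by linarith [hs.2]
    have hxy' : (0:ℝ) < y - x := by linarith
    simp only [slope_def_field] at this ⊢
    rw [div_le_div_iff₀ hxs hsy] at this
    rw [div_le_div_iff₀ hxs hxy']
    nlinarith
  have h2 : slope f x y ≤ deriv f y := by
    have ht : Tendsto (slope f y) (𝓝[<] y) (𝓝 (deriv f y)) :=
      (hasDerivAt_iff_tendsto_slope.1 hdy.hasDerivAt).mono_left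
        (nhdsWithin_mono y (fun z hz => ne_of_lt hz))
    refine ge_of_tendsto ht ?_
    filter_upwards [Ioo_mem_nhdsLT_of_mem ⟨hlt, le_refl y⟩] with s hs
    have hsI : s ∈ Icc (0:ℝ) 1 := ⟨hx.1.le.trans hs.1.le, hs.2.le.trans hy.2.le⟩
    have := hf.slope_mono_adjacent hxI hyI hs.1 hs.2
    have hxs : (0:ℝ) < s - x := by linarith [hs.1]
    have hsy : (0:ℝ) < y - s := by linarith [hs.2]
    have hxy' : (0:ℝ) < y - x := by linarith
    simp only [slope_def_field] at this ⊢
    rw [div_le_div_iff₀ hxs hsy] at this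
    have hrw : (f s - f y) / (s - y) = (f y - f s) / (y - s) := by
      rw [← neg_div_neg_eq]; ring_nf
    rw [hrw, div_le_div_iff₀ hxy' hsy]
    nlinarith
  linarith

-- integrability helper
lemma intInt {f : ℝ → ℝ} {B a b : ℝ} (hm : Measurable f) (hab : a ≤ b)
    (hb : ∀ t ∈ Ioo a b, |f t| ≤ B) : IntervalIntegrable f volume a b := by
  rw [intervalIntegrable_iff_integrableOn_Ioo_of_le hab]
  refine ⟨hm.aestronglyMeasurable.restrict, ?_⟩
  apply HasFiniteIntegral.restrict_of_bounded (C := B) measure_Ioo_lt_top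
  filter_upwards [ae_restrict_mem measurableSet_Ioo] with t ht
  simpa [Real.norm_eq_abs] using hb t ht

set_option maxHeartbeats 1000000 in
lemma master {φ g h : ℝ → ℝ} {L : ℝ} (hL : 0 ≤ L)
    (hφm : Measurable φ) (hgm : Measurable g) (hhm : Measurable h)
    (hφ0 : φ 0 = 0) (hφ1 : φ 1 = 0)
    (hφlip : ∀ s ∈ Icc (0:ℝ) 1, ∀ r ∈ Icc (0:ℝ) 1, |φ s - φ r| ≤ L * |s - r|)
    (hg01 : ∀ t ∈ Ioo (0:ℝ) 1, g t ∈ Icc (0:ℝ) 1)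
    (hhb : ∀ t ∈ Ioo (0:ℝ) 1, |h t| ≤ L)
    (D : Set ℝ) (hDn : volume (Ioo 0 1 \ D) = 0)
    (hsign : ∀ s ∈ D ∩ Ioo (0:ℝ) 1, ∀ t ∈ D ∩ Ioo (0:ℝ) 1, t ≤ s → φ s * (g t - g s) ≤ 0)
    (hconv : ∀ᵐ t, t ∈ Ioo (0:ℝ) 1 →
      Tendsto (fun n : ℕ => (n:ℝ) * (φ (t + 1/n) - φ t)) atTop (𝓝 (h t))) :
    (∫ t in (0:ℝ)..1, h t * g t) ≤ 0 := by
  -- |φ s| ≤ L * s  and |φ s| ≤ L * (1-s) on [0,1]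
  have hφb0 : ∀ s ∈ Icc (0:ℝ) 1, |φ s| ≤ L * s := by
    intro s hs
    have := hφlip s hs 0 ⟨le_rfl, zero_le_one⟩
    rw [hφ0, sub_zero, sub_zero, abs_of_nonneg hs.1] at this
    exact this
  have hφb1 : ∀ s ∈ Icc (0:ℝ) 1, |φ s| ≤ L * (1 - s) := by
    intro s hs
    have := hφlip s hs 1 ⟨zero_le_one, le_rfl⟩
    rw [hφ1, sub_zero] at this
    have habs : |s - (1:ℝ)| = 1 - s := by
      rw [abs_sub_comm]; exact abs_of_nonneg (by linarith [hs.2])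
    rwa [habs] at this
  have hφbL : ∀ s ∈ Icc (0:ℝ) 1, |φ s| ≤ L := by
    intro s hs
    exact (hφb0 s hs).trans (by nlinarith [hs.1, hs.2])
  set A : ℕ → ℝ := fun n => ∫ t in (0:ℝ)..(1 - 1/n), (n:ℝ) * (φ (t + 1/n) - φ t) * g t with hA
  have stepA : Tendsto A atTop (𝓝 (∫ t in (0:ℝ)..1, h t * g t)) := by
    set F : ℕ → ℝ → ℝ := fun n t =>
      indicator (Ioo (0:ℝ) (1 - 1/n)) (fun t => (n:ℝ) * (φ (t + 1/n) - φ t) * g t) t with hF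
    have key : Tendsto (fun n : ℕ => ∫ t in Ioo (0:ℝ) 1, F n t) atTop
        (𝓝 (∫ t in Ioo (0:ℝ) 1, h t * g t)) := by
      apply tendsto_integral_of_dominated_convergence (fun _ => L)
      · intro n
        refine Measurable.aestronglyMeasurable ?_ |>.restrict
        exact (((measurable_const.mul ((hφm.comp (measurable_id.add_const _)).sub hφm)).mul
          hgm).indicator measurableSet_Ioo)
      · exact integrableOn_const measure_Ioo_lt_top.ne
      · intro n
        filter_upwards [ae_restrict_mem measurableSet_Ioo] with t ht
        rw [Real.norm_eq_abs]
        by_cases htn : t ∈ Ioo (0:ℝ) (1 - 1/n)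
        · rw [hF]; simp only [indicator_of_mem htn]
          rcases Nat.eq_zero_or_pos n with rfl | hn
          · simpa using hL
          have hn0 : (0:ℝ) < (n:ℝ) := by exact_mod_cast hn
          have h1n : (0:ℝ) < 1/n := by positivity
          have htI : t ∈ Icc (0:ℝ) 1 := ⟨ht.1.le, ht.2.le⟩
          have ht1 : t + 1/n ∈ Icc (0:ℝ) 1 := ⟨by linarith [ht.1], by linarith [htn.2]⟩
          have hφΔ : |φ (t + 1/n) - φ t| ≤ L * (1/n) := by
            have h2 := hφlip (t + 1/n) ht1 t htI
            have : |t + 1/(n:ℝ) - t| = 1/n := by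
              rw [add_sub_cancel_left, abs_of_pos h1n]
            rwa [this] at h2
          have hgt := hg01 t ht
          have hg1 : |g t| ≤ 1 := abs_le.2 ⟨by linarith [hgt.1], hgt.2⟩
          calc |(n:ℝ) * (φ (t + 1/n) - φ t) * g t|
              = (n:ℝ) * |φ (t + 1/n) - φ t| * |g t| := by
                rw [abs_mul, abs_mul, abs_of_pos hn0]
            _ ≤ (n:ℝ) * (L * (1/n)) * 1 := by
                apply mul_le_mul (mul_le_mul le_rfl hφΔ (abs_nonneg _) hn0.le) hg1
                  (abs_nonneg _) (by positivity)
            _ = L := by field_simp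
        · rw [hF]; simp only [indicator_of_notMem htn]
          simpa using hL
      · filter_upwards [ae_restrict_mem measurableSet_Ioo, ae_restrict_of_ae hconv] with t ht hc
        have hc' := hc ht
        refine (hc'.mul_const (g t)).congr' ?_
        have : ∀ᶠ n : ℕ in atTop, (1:ℝ)/n < 1 - t := by
          exact tendsto_one_div_atTop_nhds_zero_nat.eventually_lt_const (by linarith [ht.2])
        filter_upwards [this] with n hn
        rw [hF]; simp only [indicator_of_mem (show t ∈ Ioo (0:ℝ) (1 - 1/n) from ⟨ht.1, by linarith⟩)]
    -- rewrite both sides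
    have e1 : (∫ t in Ioo (0:ℝ) 1, h t * g t) = ∫ t in (0:ℝ)..1, h t * g t := by
      rw [intervalIntegral.integral_of_le zero_le_one, integral_Ioc_eq_integral_Ioo]
    rw [e1] at key
    refine key.congr' ?_
    filter_upwards [eventually_ge_atTop 2] with n hn
    have hn0 : (0:ℝ) < (n:ℝ) := by positivity
    have h1n : (0:ℝ) < 1/n := by positivity
    have hεle : (1:ℝ)/n ≤ 1/2 := by
      apply div_le_div_of_nonneg_left one_pos.le two_pos
      exact_mod_cast hn
    have hsub : Ioo (0:ℝ) (1 - 1/n) ⊆ Ioo 0 1 := Ioo_subset_Ioo le_rfl (by linarith)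
    simp only [hA, hF]
    rw [setIntegral_indicator measurableSet_Ioo, inter_eq_self_of_subset_right hsub,
      intervalIntegral.integral_of_le (by linarith : (0:ℝ) ≤ 1 - 1/n), integral_Ioc_eq_integral_Ioo]
  have stepB : ∀ᶠ n in atTop, A n ≤ 2 * L / n := by
    rw [hA]
    filter_upwards [eventually_ge_atTop 2] with n hn
    have hn0 : (0:ℝ) < (n:ℝ) := by positivity
    set ε : ℝ := 1/n with hε
    have hε0 : (0:ℝ) < ε := by positivity
    have hεle : ε ≤ 1/2 := by
      rw [hε]
      apply div_le_div_of_nonneg_left one_pos.le two_pos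
      exact_mod_cast hn
    -- bounds for the three pieces
    have hb_fg : ∀ t ∈ Ioo (0:ℝ) 1, |φ t * g t| ≤ L := by
      intro t ht
      have h1 := hφbL t ⟨ht.1.le, ht.2.le⟩
      have h2 := hg01 t ht
      rw [abs_mul]
      calc |φ t| * |g t| ≤ L * 1 :=
        mul_le_mul h1 (abs_le.2 ⟨by linarith [h2.1], h2.2⟩) (abs_nonneg _) hL
      _ = L := mul_one L
    have hb_fg' : ∀ t ∈ Ioo ε 1, |φ t * g (t - ε)| ≤ L := by
      intro t ht
      have h1 := hφbL t ⟨hε0.le.trans ht.1.le, ht.2.le⟩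
      have h2 := hg01 (t - ε) ⟨by linarith [ht.1], by linarith [ht.2]⟩
      rw [abs_mul]
      calc |φ t| * |g (t - ε)| ≤ L * 1 :=
        mul_le_mul h1 (abs_le.2 ⟨by linarith [h2.1], h2.2⟩) (abs_nonneg _) hL
      _ = L := mul_one L
    have mg : Measurable (fun t => φ t * g t) := hφm.mul hgm
    have mg' : Measurable (fun t => φ t * g (t - ε)) :=
      hφm.mul (hgm.comp (measurable_id.add_const (-ε)))
    -- integrability
    have i1 : IntervalIntegrable (fun t => φ t * g (t - ε)) volume ε (1 - ε) :=
      intInt mg' (by linarith) (fun t ht => hb_fg' t ⟨ht.1, by linarith [ht.2]⟩)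
    have i2 : IntervalIntegrable (fun t => φ t * g (t - ε)) volume (1 - ε) 1 :=
      intInt mg' (by linarith) (fun t ht => hb_fg' t ⟨by linarith [ht.1], ht.2⟩)
    have i3 : IntervalIntegrable (fun t => φ t * g t) volume 0 ε :=
      intInt mg (by linarith) (fun t ht => hb_fg t ⟨ht.1, by linarith [ht.2]⟩)
    have i4 : IntervalIntegrable (fun t => φ t * g t) volume ε (1 - ε) :=
      intInt mg (by linarith) (fun t ht => hb_fg t ⟨by linarith [ht.1], by linarith [ht.2]⟩)
    -- decomposition
    have decomp : (∫ t in (0:ℝ)..(1 - 1/n), (n:ℝ) * (φ (t + 1/n) - φ t) * g t)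
        = (n:ℝ) * ((∫ t in ε..(1-ε), (φ t * g (t - ε) - φ t * g t))
            + (∫ t in (1-ε)..1, φ t * g (t - ε)) - ∫ t in (0:ℝ)..ε, φ t * g t) := by
      have e0 : (∫ t in (0:ℝ)..(1 - 1/n), (n:ℝ) * (φ (t + 1/n) - φ t) * g t)
          = (n:ℝ) * ∫ t in (0:ℝ)..(1-ε), (φ (t + ε) * g t - φ t * g t) := by
        rw [← intervalIntegral.integral_const_mul]
        apply intervalIntegral.integral_congr
        intro t _
        rw [← hε]; ring
      rw [e0]
      congr 1
      have isub1 : IntervalIntegrable (fun t => φ (t + ε) * g t) volume 0 (1-ε) := by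
        apply intInt (hφm.comp (measurable_id.add_const ε) |>.mul hgm) (by linarith)
        intro t ht
        have h1 := hφbL (t + ε) ⟨by linarith [ht.1], by linarith [ht.2]⟩
        have h2 := hg01 t ⟨ht.1, by linarith [ht.2]⟩
        show |φ (t + ε) * g t| ≤ _; rw [abs_mul]
        calc |φ (t+ε)| * |g t| ≤ L * 1 :=
          mul_le_mul h1 (abs_le.2 ⟨by linarith [h2.1], h2.2⟩) (abs_nonneg _) hL
        _ = L := mul_one L
      have isub2 : IntervalIntegrable (fun t => φ t * g t) volume 0 (1-ε) :=
        intInt mg (by linarith) (fun t ht => hb_fg t ⟨ht.1, by linarith [ht.2]⟩)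
      rw [intervalIntegral.integral_sub isub1 isub2]
      have shift : (∫ t in (0:ℝ)..(1-ε), φ (t + ε) * g t)
          = ∫ t in ε..1, φ t * g (t - ε) := by
        have := intervalIntegral.integral_comp_add_right
          (a := (0:ℝ)) (b := 1 - ε) (fun t => φ t * g (t - ε)) ε
        simp only [add_sub_cancel_right] at this
        rw [zero_add, sub_add_cancel] at this
        rw [← this]
      rw [shift]
      rw [← intervalIntegral.integral_add_adjacent_intervals i1 i2,
          ← intervalIntegral.integral_add_adjacent_intervals i3 i4,
          intervalIntegral.integral_sub i1 i4]
      ring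
    rw [decomp]
    -- T1 ≤ 0
    have hT1 : (∫ t in ε..(1-ε), (φ t * g (t - ε) - φ t * g t)) ≤ 0 := by
      have hDn' : volume ((fun s => s + (-ε)) ⁻¹' (Ioo 0 1 \ D)) = 0 := by
        rw [measure_preimage_add_right]; exact hDn
      have h0 : (∫ t in ε..(1-ε), (0:ℝ)) = 0 := by simp
      rw [← h0]
      apply intervalIntegral.integral_mono_ae_restrict (by linarith) (i1.sub i4)
        intervalIntegrable_const
      have ae1 : ∀ᵐ t ∂(volume.restrict (Icc ε (1-ε))), t ∉ Ioo 0 1 \ D :=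
        ae_restrict_of_ae ((measure_eq_zero_iff_ae_notMem).1 hDn)
      have ae2 : ∀ᵐ t ∂(volume.restrict (Icc ε (1-ε))), t + (-ε) ∉ Ioo 0 1 \ D :=
        ae_restrict_of_ae ((measure_eq_zero_iff_ae_notMem).1 hDn')
      have ae3 : ∀ᵐ t ∂(volume.restrict (Icc ε (1-ε))), t ≠ ε := by
        apply ae_restrict_of_ae
        rw [ae_iff]
        convert Real.volume_singleton (a := ε) using 2
        ext t; simp
      filter_upwards [ae_restrict_mem measurableSet_Icc, ae1, ae2, ae3] with t htI h1 h2 h3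
      have htε : ε < t := lt_of_le_of_ne htI.1 (Ne.symm h3)
      have ht1 : t ∈ Ioo (0:ℝ) 1 := ⟨by linarith, by linarith [htI.2]⟩
      have ht2 : t - ε ∈ Ioo (0:ℝ) 1 := ⟨by linarith, by linarith [htI.2]⟩
      have hD1 : t ∈ D := by
        by_contra hc; exact h1 ⟨ht1, hc⟩
      have hD2 : t - ε ∈ D := by
        by_contra hc
        exact h2 ⟨by simpa [sub_eq_add_neg] using ht2, by rwa [← sub_eq_add_neg]⟩
      have := hsign t ⟨hD1, ht1⟩ (t - ε) ⟨hD2, ht2⟩ (by linarith)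
      nlinarith [this]
    -- T2 ≤ L * ε * ε
    have hT2 : (∫ t in (1-ε)..1, φ t * g (t - ε)) ≤ ε * (L * ε) := by
      have hc : (∫ t in (1-ε)..(1:ℝ), (L * ε)) = ε * (L * ε) := by
        simp [intervalIntegral.integral_const, smul_eq_mul]; ring
      rw [← hc]
      apply intervalIntegral.integral_mono_ae_restrict (by linarith) i2 intervalIntegrable_const
      have ae3 : ∀ᵐ t ∂(volume.restrict (Icc (1-ε) 1)), t ≠ 1-ε := by
        apply ae_restrict_of_ae; rw [ae_iff]
        convert Real.volume_singleton (a := 1-ε) using 2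
        ext t; simp
      have ae4 : ∀ᵐ t ∂(volume.restrict (Icc (1-ε) 1)), t ≠ 1 := by
        apply ae_restrict_of_ae; rw [ae_iff]
        convert Real.volume_singleton (a := (1:ℝ)) using 2
        ext t; simp
      filter_upwards [ae_restrict_mem measurableSet_Icc, ae3, ae4] with t htI h3 h4
      have htl : 1 - ε < t := lt_of_le_of_ne htI.1 (Ne.symm h3)
      have htr : t < 1 := lt_of_le_of_ne htI.2 h4
      have h1 := hφb1 t ⟨by linarith, htI.2⟩
      have h2 := hg01 (t - ε) ⟨by linarith, by linarith⟩
      calc φ t * g (t - ε) ≤ |φ t * g (t - ε)| := le_abs_self _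
        _ ≤ (L * (1 - t)) * 1 := by
            rw [abs_mul]
            exact mul_le_mul h1 (abs_le.2 ⟨by linarith [h2.1], h2.2⟩) (abs_nonneg _)
              (by nlinarith)
        _ ≤ L * ε := by nlinarith
    -- T3 ≥ -(L * ε * ε)
    have hT3 : -(ε * (L * ε)) ≤ (∫ t in (0:ℝ)..ε, φ t * g t) := by
      have hc : (∫ t in (0:ℝ)..ε, (-(L * ε))) = -(ε * (L * ε)) := by
        simp [intervalIntegral.integral_const, smul_eq_mul]; ring
      rw [← hc]
      apply intervalIntegral.integral_mono_ae_restrict (by linarith) intervalIntegrable_const i3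
      have ae3 : ∀ᵐ t ∂(volume.restrict (Icc (0:ℝ) ε)), t ≠ 0 := by
        apply ae_restrict_of_ae; rw [ae_iff]
        convert Real.volume_singleton (a := (0:ℝ)) using 2
        ext t; simp
      have ae4 : ∀ᵐ t ∂(volume.restrict (Icc (0:ℝ) ε)), t ≠ ε := by
        apply ae_restrict_of_ae; rw [ae_iff]
        convert Real.volume_singleton (a := ε) using 2
        ext t; simp
      filter_upwards [ae_restrict_mem measurableSet_Icc, ae3, ae4] with t htI h3 h4
      have htl : 0 < t := lt_of_le_of_ne htI.1 (Ne.symm h3)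
      have htr : t < ε := lt_of_le_of_ne htI.2 h4
      have h1 := hφb0 t ⟨htI.1, by linarith⟩
      have h2 := hg01 t ⟨htl, by linarith⟩
      have : |φ t * g t| ≤ L * ε := by
        rw [abs_mul]
        calc |φ t| * |g t| ≤ (L * t) * 1 :=
          mul_le_mul h1 (abs_le.2 ⟨by linarith [h2.1], h2.2⟩) (abs_nonneg _) (by nlinarith)
        _ ≤ L * ε := by nlinarith
      have := abs_le.1 this
      linarith [this.1]
    have final : (∫ t in ε..(1-ε), (φ t * g (t - ε) - φ t * g t))
        + (∫ t in (1-ε)..1, φ t * g (t - ε)) - (∫ t in (0:ℝ)..ε, φ t * g t)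
        ≤ 2 * (L * ε * ε) := by linarith
    calc (n:ℝ) * ((∫ t in ε..(1-ε), (φ t * g (t - ε) - φ t * g t))
            + (∫ t in (1-ε)..1, φ t * g (t - ε)) - ∫ t in (0:ℝ)..ε, φ t * g t)
        ≤ (n:ℝ) * (2 * (L * ε * ε)) := mul_le_mul_of_nonneg_left final hn0.le
      _ = 2 * L / n := by rw [hε]; field_simp
  have hlim : Tendsto (fun n : ℕ => 2 * L / n) atTop (𝓝 0) := by
    simpa [div_eq_mul_inv] using Tendsto.const_mul (2*L) tendsto_one_div_atTop_nhds_zero_nat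
  exact le_of_tendsto_of_tendsto stepA hlim stepB


lemma copula_mono2 {C : ℝ → ℝ → ℝ} (hC : IsCopula C) {u : ℝ} (hu : u ∈ Icc (0:ℝ) 1) :
    ∀ s ∈ Icc (0:ℝ) 1, ∀ r ∈ Icc (0:ℝ) 1, s ≤ r → C u s ≤ C u r := by
  intro s hs r hr hsr
  have h := hC.2.2 0 u s r ⟨le_rfl, zero_le_one⟩ hu hs hr hu.1 hsr
  have h1 := (hC.2.1 s hs).1
  have h2 := (hC.2.1 r hr).1
  linarith

lemma copula_lip2 {C : ℝ → ℝ → ℝ} (hC : IsCopula C) {u : ℝ} (hu : u ∈ Icc (0:ℝ) 1) :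
    ∀ s ∈ Icc (0:ℝ) 1, ∀ r ∈ Icc (0:ℝ) 1, s ≤ r → C u r - C u s ≤ r - s := by
  intro s hs r hr hsr
  have h := hC.2.2 u 1 s r hu ⟨zero_le_one, le_rfl⟩ hs hr hu.2 hsr
  have h1 := (hC.2.1 s hs).2
  have h2 := (hC.2.1 r hr).2
  linarith

lemma copula_mono1 {C : ℝ → ℝ → ℝ} (hC : IsCopula C) {v : ℝ} (hv : v ∈ Icc (0:ℝ) 1) :
    ∀ s ∈ Icc (0:ℝ) 1, ∀ r ∈ Icc (0:ℝ) 1, s ≤ r → C s v ≤ C r v := by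
  intro s hs r hr hsr
  have h := hC.2.2 s r 0 v hs hr ⟨le_rfl, zero_le_one⟩ hv hsr hv.1
  have h1 := (hC.1 s hs).1
  have h2 := (hC.1 r hr).1
  linarith

lemma copula_lip1 {C : ℝ → ℝ → ℝ} (hC : IsCopula C) {v : ℝ} (hv : v ∈ Icc (0:ℝ) 1) :
    ∀ s ∈ Icc (0:ℝ) 1, ∀ r ∈ Icc (0:ℝ) 1, s ≤ r → C r v - C s v ≤ r - s := by
  intro s hs r hr hsr
  have h := hC.2.2 s r v 1 hs hr hv ⟨zero_le_one, le_rfl⟩ hsr hv.2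
  have h1 := (hC.1 s hs).2
  have h2 := (hC.1 r hr).2
  linarith

lemma copula_abslip2 {C : ℝ → ℝ → ℝ} (hC : IsCopula C) {u : ℝ} (hu : u ∈ Icc (0:ℝ) 1) :
    ∀ s ∈ Icc (0:ℝ) 1, ∀ r ∈ Icc (0:ℝ) 1, |C u s - C u r| ≤ |s - r| := by
  intro s hs r hr
  rcases le_total s r with hsr | hrs
  · have m := copula_mono2 hC hu s hs r hr hsr
    have l := copula_lip2 hC hu s hs r hr hsr
    rw [abs_sub_comm, abs_sub_comm s r]
    rw [abs_of_nonneg (by linarith), abs_of_nonneg (by linarith)]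
    linarith
  · have m := copula_mono2 hC hu r hr s hs hrs
    have l := copula_lip2 hC hu r hr s hs hrs
    rw [abs_of_nonneg (by linarith), abs_of_nonneg (by linarith)]
    linarith

set_option maxHeartbeats 1000000 in
lemma key {C₁ C₂ : ℝ → ℝ → ℝ} (h₁ : IsCopula C₁) (h₂ : IsCopula C₂)
    {v x y a b : ℝ} (σ : ℝ) (hv : v ∈ Icc (0:ℝ) 1) (hx : x ∈ Icc (0:ℝ) 1)
    (hy : y ∈ Icc (0:ℝ) 1)
    (ha : 0 ≤ a) (hb : 0 ≤ b) (hab : a + b = 1) (hσ : |σ| = 1)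
    (hsgn : ∀ s ∈ Ioo (0:ℝ) 1, ∀ t ∈ Ioo (0:ℝ) 1, t ≤ s →
      DifferentiableAt ℝ (fun r => C₂ r v) s → DifferentiableAt ℝ (fun r => C₂ r v) t →
      (σ * (C₁ (a*x+b*y) s - (a * C₁ x s + b * C₁ y s))) *
        (deriv (fun r => C₂ r v) t - deriv (fun r => C₂ r v) s) ≤ 0) :
    σ * (MarkovProduct C₁ C₂ (a*x+b*y) v
      - (a * MarkovProduct C₁ C₂ x v + b * MarkovProduct C₁ C₂ y v)) ≤ 0 := by
  set u₀ : ℝ := a*x+b*y with hu₀def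
  have hu₀ : u₀ ∈ Icc (0:ℝ) 1 := ⟨by nlinarith [hx.1, hy.1], by nlinarith [hx.2, hy.2]⟩
  set d₀ : ℝ → ℝ := deriv (fun s => C₁ u₀ s) with hd₀
  set d₁ : ℝ → ℝ := deriv (fun s => C₁ x s) with hd₁
  set d₂ : ℝ → ℝ := deriv (fun s => C₁ y s) with hd₂
  set g : ℝ → ℝ := deriv (fun s => C₂ s v) with hg
  set φ : ℝ → ℝ := fun s => σ * (C₁ u₀ (clamp s) - (a * C₁ x (clamp s) + b * C₁ y (clamp s)))
    with hφ
  set h : ℝ → ℝ := fun t => σ * (d₀ t - (a * d₁ t + b * d₂ t)) with hh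
  -- monotonicity of clamped slices
  have m0 : Monotone (fun s => C₁ u₀ (clamp s)) := fun p q hpq =>
    copula_mono2 h₁ hu₀ _ (clamp_mem p) _ (clamp_mem q) (clamp_mono hpq)
  have m1 : Monotone (fun s => C₁ x (clamp s)) := fun p q hpq =>
    copula_mono2 h₁ hx _ (clamp_mem p) _ (clamp_mem q) (clamp_mono hpq)
  have m2 : Monotone (fun s => C₁ y (clamp s)) := fun p q hpq =>
    copula_mono2 h₁ hy _ (clamp_mem p) _ (clamp_mem q) (clamp_mono hpq)
  have hφm : Measurable φ :=
    measurable_const.mul (m0.measurable.sub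
      ((measurable_const.mul m1.measurable).add (measurable_const.mul m2.measurable)))
  have hgm : Measurable g := measurable_deriv _
  have hhm : Measurable h :=
    measurable_const.mul ((measurable_deriv _).sub
      ((measurable_const.mul (measurable_deriv _)).add
        (measurable_const.mul (measurable_deriv _))))
  have h00 : clamp 0 = 0 := clamp_eq ⟨le_rfl, zero_le_one⟩
  have h11 : clamp 1 = 1 := clamp_eq ⟨zero_le_one, le_rfl⟩
  have hφ0 : φ 0 = 0 := by
    rw [hφ]; simp only [h00]
    rw [(h₁.1 u₀ hu₀).1, (h₁.1 x hx).1, (h₁.1 y hy).1]; ring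
  have hφ1 : φ 1 = 0 := by
    rw [hφ]; simp only [h11]
    rw [(h₁.1 u₀ hu₀).2, (h₁.1 x hx).2, (h₁.1 y hy).2]; ring
  have hφlip : ∀ s ∈ Icc (0:ℝ) 1, ∀ r ∈ Icc (0:ℝ) 1, |φ s - φ r| ≤ 2 * |s - r| := by
    intro s hs r hr
    rw [hφ]; simp only [clamp_eq hs, clamp_eq hr]
    have l0 := copula_abslip2 h₁ hu₀ s hs r hr
    have l1 := copula_abslip2 h₁ hx s hs r hr
    have l2 := copula_abslip2 h₁ hy s hs r hr
    have e : σ * (C₁ u₀ s - (a * C₁ x s + b * C₁ y s))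
        - σ * (C₁ u₀ r - (a * C₁ x r + b * C₁ y r))
        = σ * ((C₁ u₀ s - C₁ u₀ r) - (a * (C₁ x s - C₁ x r) + b * (C₁ y s - C₁ y r))) := by
      ring
    rw [e, abs_mul, hσ, one_mul]
    calc |(C₁ u₀ s - C₁ u₀ r) - (a * (C₁ x s - C₁ x r) + b * (C₁ y s - C₁ y r))|
        ≤ |C₁ u₀ s - C₁ u₀ r| + (a * |C₁ x s - C₁ x r| + b * |C₁ y s - C₁ y r|) := by
          have t1 := abs_sub (C₁ u₀ s - C₁ u₀ r)
            (a * (C₁ x s - C₁ x r) + b * (C₁ y s - C₁ y r))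
          have t2 := abs_add_le (a * (C₁ x s - C₁ x r)) (b * (C₁ y s - C₁ y r))
          rw [abs_mul, abs_mul, abs_of_nonneg ha, abs_of_nonneg hb] at t2
          linarith
      _ ≤ |s - r| + (a * |s - r| + b * |s - r|) := by
          have := mul_le_mul_of_nonneg_left l1 ha
          have := mul_le_mul_of_nonneg_left l2 hb
          linarith
      _ = 2 * |s - r| := by linear_combination |s - r| * hab
  have hg01 : ∀ t ∈ Ioo (0:ℝ) 1, g t ∈ Icc (0:ℝ) 1 := fun t ht =>
    deriv_mem_Icc ht (copula_mono1 h₂ hv) (copula_lip1 h₂ hv)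
  have hd01 : ∀ u, u ∈ Icc (0:ℝ) 1 → ∀ t ∈ Ioo (0:ℝ) 1,
      deriv (fun s => C₁ u s) t ∈ Icc (0:ℝ) 1 := fun u hu t ht =>
    deriv_mem_Icc ht (copula_mono2 h₁ hu) (copula_lip2 h₁ hu)
  have hhb : ∀ t ∈ Ioo (0:ℝ) 1, |h t| ≤ 2 := by
    intro t ht
    have b0 := hd01 u₀ hu₀ t ht
    have b1 := hd01 x hx t ht
    have b2 := hd01 y hy t ht
    rw [hh, abs_mul, hσ, one_mul]
    rw [abs_le]
    constructor
    · nlinarith [b0.1, b1.2, b2.2]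
    · nlinarith [b0.2, b1.1, b2.1]
  set D : Set ℝ := {t | DifferentiableAt ℝ (fun r => C₂ r v) t} with hD
  have hDn : volume (Ioo 0 1 \ D) = 0 := by
    have hae := ae_diff_Ioo (copula_mono1 h₂ hv)
    rw [ae_iff] at hae
    refine measure_mono_null ?_ hae
    intro t ht
    simp only [mem_setOf_eq, not_forall]
    exact ⟨ht.1, ht.2⟩
  have hsign : ∀ s ∈ D ∩ Ioo (0:ℝ) 1, ∀ t ∈ D ∩ Ioo (0:ℝ) 1, t ≤ s →
      φ s * (g t - g s) ≤ 0 := by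
    intro s hs t ht hts
    have hsIcc : s ∈ Icc (0:ℝ) 1 := ⟨hs.2.1.le, hs.2.2.le⟩
    rw [hφ]; simp only [clamp_eq hsIcc]
    exact hsgn s hs.2 t ht.2 hts hs.1 ht.1
  have hconv : ∀ᵐ t, t ∈ Ioo (0:ℝ) 1 →
      Tendsto (fun n : ℕ => (n:ℝ) * (φ (t + 1/n) - φ t)) atTop (𝓝 (h t)) := by
    have a0 := ae_diff_Ioo (copula_mono2 h₁ hu₀)
    have a1 := ae_diff_Ioo (copula_mono2 h₁ hx)
    have a2 := ae_diff_Ioo (copula_mono2 h₁ hy)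
    filter_upwards [a0, a1, a2] with t H0 H1 H2 ht
    have combo : Tendsto (fun n : ℕ => σ * ((n:ℝ) * (C₁ u₀ (t + 1/n) - C₁ u₀ t)
        - (a * ((n:ℝ) * (C₁ x (t + 1/n) - C₁ x t))
          + b * ((n:ℝ) * (C₁ y (t + 1/n) - C₁ y t))))) atTop (𝓝 (h t)) := by
      rw [hh]
      exact (((tendsto_quot (H0 ht)).sub
        (((tendsto_quot (H1 ht)).const_mul a).add
          ((tendsto_quot (H2 ht)).const_mul b))).const_mul σ)
    refine combo.congr' ?_
    have hev : ∀ᶠ n : ℕ in atTop, (1:ℝ)/n < 1 - t ∧ 1 ≤ n := by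
      refine (tendsto_one_div_atTop_nhds_zero_nat.eventually_lt_const
        (by linarith [ht.2])).and (eventually_ge_atTop 1)
    filter_upwards [hev] with n hn
    have hn0 : (0:ℝ) < (n:ℝ) := by exact_mod_cast hn.2
    have h1n : (0:ℝ) ≤ 1/(n:ℝ) := by positivity
    have htn : t + 1/(n:ℝ) ∈ Icc (0:ℝ) 1 := ⟨by linarith [ht.1], by linarith [hn.1]⟩
    rw [hφ]
    simp only [clamp_eq htn, clamp_eq ⟨ht.1.le, ht.2.le⟩]
    ring
  have hmaster := master (by norm_num : (0:ℝ) ≤ 2) hφm hgm hhm hφ0 hφ1 hφlip hg01 hhb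
    D hDn hsign hconv
  -- rewrite ∫ h*g as σ * (M u₀ - (a M x + b M y))
  have i0 : IntervalIntegrable (fun t => d₀ t * g t) volume 0 1 := by
    apply intInt (B := 1) ((measurable_deriv _).mul (measurable_deriv _)) zero_le_one
    intro t ht
    have b0 := hd01 u₀ hu₀ t ht
    have bg := hg01 t ht
    show |d₀ t * g t| ≤ 1; rw [abs_mul]
    have e0 : |d₀ t| ≤ 1 := abs_le.2 ⟨by linarith [b0.1], b0.2⟩
    have eg : |g t| ≤ 1 := abs_le.2 ⟨by linarith [bg.1], bg.2⟩
    nlinarith [abs_nonneg (d₀ t), abs_nonneg (g t)]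
  have i1 : IntervalIntegrable (fun t => d₁ t * g t) volume 0 1 := by
    apply intInt (B := 1) ((measurable_deriv _).mul (measurable_deriv _)) zero_le_one
    intro t ht
    have b0 := hd01 x hx t ht
    have bg := hg01 t ht
    show |d₁ t * g t| ≤ 1; rw [abs_mul]
    have e0 : |d₁ t| ≤ 1 := abs_le.2 ⟨by linarith [b0.1], b0.2⟩
    have eg : |g t| ≤ 1 := abs_le.2 ⟨by linarith [bg.1], bg.2⟩
    nlinarith [abs_nonneg (d₁ t), abs_nonneg (g t)]
  have i2 : IntervalIntegrable (fun t => d₂ t * g t) volume 0 1 := by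
    apply intInt (B := 1) ((measurable_deriv _).mul (measurable_deriv _)) zero_le_one
    intro t ht
    have b0 := hd01 y hy t ht
    have bg := hg01 t ht
    show |d₂ t * g t| ≤ 1; rw [abs_mul]
    have e0 : |d₂ t| ≤ 1 := abs_le.2 ⟨by linarith [b0.1], b0.2⟩
    have eg : |g t| ≤ 1 := abs_le.2 ⟨by linarith [bg.1], bg.2⟩
    nlinarith [abs_nonneg (d₂ t), abs_nonneg (g t)]
  have heq : (∫ t in (0:ℝ)..1, h t * g t)
      = σ * (MarkovProduct C₁ C₂ u₀ v
        - (a * MarkovProduct C₁ C₂ x v + b * MarkovProduct C₁ C₂ y v)) := by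
    have e1 : ∀ t, h t * g t
        = σ * (d₀ t * g t - (a * (d₁ t * g t) + b * (d₂ t * g t))) := by
      intro t; rw [hh]; ring
    rw [intervalIntegral.integral_congr (fun t _ => e1 t)]
    rw [intervalIntegral.integral_const_mul]
    rw [intervalIntegral.integral_sub i0 ((i1.const_mul a).add (i2.const_mul b))]
    rw [intervalIntegral.integral_add (i1.const_mul a) (i2.const_mul b)]
    rw [intervalIntegral.integral_const_mul, intervalIntegral.integral_const_mul]
    rfl
  rw [heq] at hmaster
  exact hmaster

theorem stochMonotone_markovProduct_mixed (C₁ C₂ : ℝ → ℝ → ℝ)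
    (h₁ : IsCopula C₁) (h₂ : IsCopula C₂) :
    (StochIncr C₁ → StochDecr C₂ → StochDecr (MarkovProduct C₁ C₂)) ∧
    (StochDecr C₁ → StochIncr C₂ → StochDecr (MarkovProduct C₁ C₂)) ∧
    (StochDecr C₁ → StochDecr C₂ → StochIncr (MarkovProduct C₁ C₂)) := by
  refine ⟨?_, ?_, ?_⟩
  · intro hSI hSD v hv
    refine ⟨convex_Icc _ _, ?_⟩
    intro x hx y hy a b ha hb hab
    simp only [smul_eq_mul]
    have hk := key h₁ h₂ (1:ℝ) hv hx hy ha hb hab (by norm_num) ?_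
    · linarith [hk]
    · intro s hs t ht hts hds hdt
      have hsIcc : s ∈ Icc (0:ℝ) 1 := ⟨hs.1.le, hs.2.le⟩
      have hφpos : a * C₁ x s + b * C₁ y s ≤ C₁ (a*x+b*y) s := by
        have := (hSI s hsIcc).2 hx hy ha hb hab
        simpa [smul_eq_mul] using this
      have hgmono : deriv (fun r => C₂ r v) t ≤ deriv (fun r => C₂ r v) s :=
        conv_deriv_mono (hSD v hv) ht hs hts hdt hds
      nlinarith
  · intro hSD hSI v hv
    refine ⟨convex_Icc _ _, ?_⟩
    intro x hx y hy a b ha hb hab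
    simp only [smul_eq_mul]
    have hk := key h₁ h₂ (1:ℝ) hv hx hy ha hb hab (by norm_num) ?_
    · linarith [hk]
    · intro s hs t ht hts hds hdt
      have hsIcc : s ∈ Icc (0:ℝ) 1 := ⟨hs.1.le, hs.2.le⟩
      have hφneg : C₁ (a*x+b*y) s ≤ a * C₁ x s + b * C₁ y s := by
        have := (hSD s hsIcc).2 hx hy ha hb hab
        simpa [smul_eq_mul] using this
      have hgmono : deriv (fun r => C₂ r v) s ≤ deriv (fun r => C₂ r v) t := by
        have hneg : ConvexOn ℝ (Icc (0:ℝ) 1) (fun u => -(C₂ u v)) := (hSI v hv).neg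
        have h2 := conv_deriv_mono hneg ht hs hts hdt.neg hds.neg
        rw [deriv.fun_neg, deriv.fun_neg] at h2
        linarith
      nlinarith
  · intro hSD₁ hSD₂ v hv
    refine ⟨convex_Icc _ _, ?_⟩
    intro x hx y hy a b ha hb hab
    simp only [smul_eq_mul]
    have hk := key h₁ h₂ (-1:ℝ) hv hx hy ha hb hab (by norm_num) ?_
    · linarith [hk]
    · intro s hs t ht hts hds hdt
      have hsIcc : s ∈ Icc (0:ℝ) 1 := ⟨hs.1.le, hs.2.le⟩
      have hφneg : C₁ (a*x+b*y) s ≤ a * C₁ x s + b * C₁ y s := by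
        have := (hSD₁ s hsIcc).2 hx hy ha hb hab
        simpa [smul_eq_mul] using this
      have hgmono : deriv (fun r => C₂ r v) t ≤ deriv (fun r => C₂ r v) s :=
        conv_deriv_mono (hSD₂ v hv) ht hs hts hdt hds
      nlinarith
end
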